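/- Let G be a finite connected graph with δ-thin triangles, let s be any vertex and T a BFS(s)-tree of G. For all vertices x and y of G, the estimate d̂(x,y) := h(x) + h(y) − 2·sl_T(x,y;δ) + δ satisfies d_G(x,y) ≤ d̂(x,y) ≤ d_G(x,y) + δ + 1. -/

import Mathlib

open SimpleGraph

variable {V : Type*}

/-- Eccentricity of a vertex: the largest distance from `v` to any vertex. -/
noncomputable def ecc [Fintype V] (G : SimpleGraph V) (v : V) : ℕ :=
  Finset.univ.sup fun u => G.dist v u

/-- Radius: the minimum eccentricity. -/
noncomputable def rad [Fintype V] (G : SimpleGraph V) : ℕ :=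
  sInf (Set.range (ecc G))

/-- Diameter: the maximum eccentricity. -/
noncomputable def gdiam [Fintype V] (G : SimpleGraph V) : ℕ :=
  Finset.univ.sup fun v => ecc G v

/-- `G` has δ-thin triangles: for all vertices `x y z`, all geodesics `p1` from `x` to `y`
and `p2` from `x` to `z`, and all vertices `u ∈ p1`, `v ∈ p2` with
`d(x,u) = d(x,v) ≤ (y|z)_x`, one has `d(u,v) ≤ δ`.  The Gromov product condition
`d(x,u) ≤ (y|z)_x = (d(x,y) + d(x,z) - d(y,z))/2` is written additively in `ℕ`. -/
def ThinTriangles (G : SimpleGraph V) (δ : ℝ) : Prop :=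
  ∀ (x y z : V) (p1 : G.Walk x y) (p2 : G.Walk x z),
    p1.length = G.dist x y → p2.length = G.dist x z →
    ∀ u ∈ p1.support, ∀ v ∈ p2.support,
      G.dist x u = G.dist x v →
      2 * G.dist x u + G.dist y z ≤ G.dist x y + G.dist x z →
      (G.dist u v : ℝ) ≤ δ

private lemma walk_length_drop {G : SimpleGraph V} {u v : V} (p : G.Walk u v) (n : ℕ) :
    (p.drop n).length = p.length - n := by
  induction p generalizing n with
  | nil => simp [Walk.drop]
  | cons h q ih =>
    cases n with
    | zero => simp [Walk.drop]
    | succ n => simpa [Walk.drop] using ih n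

/-- With `T` a `BFS(s)`-tree, `p z` the tree path of `T` from `s`
to `z` (so `(p z).getVert i = z_i`), and `k = sl_T(x,y;δ)` the largest index
`i ≤ min(h(x),h(y))` with `d_G(x_i,y_i) ≤ δ`, the estimate
`d̂(x,y) = h(x) + h(y) - 2k + δ` satisfies
`d_G(x,y) ≤ d̂(x,y) ≤ d_G(x,y) + δ + 1`. -/
theorem stmt_14 [Fintype V] (G : SimpleGraph V) (hG : G.Connected)
    (δ : ℝ) (hδ : 0 ≤ δ) (hthin : ThinTriangles G δ)
    (s : V) (T : SimpleGraph V) (hTG : T ≤ G) (hT : T.IsTree)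
    (hbfs : ∀ z : V, T.dist s z = G.dist s z)
    (p : ∀ z : V, T.Walk s z) (hp : ∀ z : V, (p z).IsPath)
    (x y : V) (k : ℕ)
    (hk₁ : k ≤ min (G.dist s x) (G.dist s y))
    (hk₂ : (G.dist ((p x).getVert k) ((p y).getVert k) : ℝ) ≤ δ)
    (hk₃ : ∀ i : ℕ, i ≤ min (G.dist s x) (G.dist s y) →
      (G.dist ((p x).getVert i) ((p y).getVert i) : ℝ) ≤ δ → i ≤ k) :
    (G.dist x y : ℝ) ≤ (G.dist s x : ℝ) + (G.dist s y : ℝ) - 2 * (k : ℝ) + δ ∧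
    (G.dist s x : ℝ) + (G.dist s y : ℝ) - 2 * (k : ℝ) + δ
      ≤ (G.dist x y : ℝ) + δ + 1 := by
  classical
  set f : T →g G := SimpleGraph.Hom.ofLE hTG with hf
  -- tree paths are geodesics
  have hlen : ∀ z, (p z).length = G.dist s z := by
    intro z
    obtain ⟨q, hqp, hql⟩ := hT.isConnected.exists_path_of_dist s z
    have := (hT.existsUnique_path s z).unique (hp z) hqp
    rw [this, hql, hbfs]
  -- distance from getVert i to the endpoint
  have hend : ∀ z i, G.dist ((p z).getVert i) z ≤ G.dist s z - i := by
    intro z i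
    have := SimpleGraph.dist_le (((p z).drop i).map f)
    simpa [Walk.length_map, walk_length_drop, hlen, hf, SimpleGraph.Hom.ofLE_apply] using this
  -- distance from s to getVert i
  have hstart : ∀ z i, G.dist s ((p z).getVert i) ≤ i := by
    intro z i
    rcases le_or_gt i ((p z).length) with hi | hi
    · have hrev : ((p z).reverse).getVert ((p z).length - i) = (p z).getVert i := by
        rw [Walk.getVert_reverse]
        congr 1
        omega
      have := SimpleGraph.dist_le ((((p z).reverse).drop ((p z).length - i)).map f)
      rw [Walk.length_map, walk_length_drop, Walk.length_reverse] at this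
      calc G.dist s ((p z).getVert i) = G.dist (((p z).reverse).getVert ((p z).length - i)) s := by
            rw [hrev, SimpleGraph.dist_comm]
        _ ≤ (p z).length - ((p z).length - i) := this
        _ ≤ i := by omega
    · rw [Walk.getVert_of_length_le _ hi.le]
      calc G.dist s z = (p z).length := (hlen z).symm
        _ ≤ i := hi.le
  -- exact distance from s to getVert i, for i ≤ dist s z
  have hexact : ∀ z i, i ≤ G.dist s z → G.dist s ((p z).getVert i) = i := by
    intro z i hi
    refine le_antisymm (hstart z i) ?_
    have h1 := hG.dist_triangle (u := s) (v := (p z).getVert i) (w := z)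
    have h2 := hend z i
    omega
  -- membership of getVert in the mapped walk's support
  have hmem : ∀ z i, (p z).getVert i ∈ ((p z).map f).support := by
    intro z i
    rw [Walk.support_map, hf, SimpleGraph.Hom.coe_ofLE, List.map_id]
    exact Walk.mem_support_iff_exists_getVert.mpr
      ⟨min i ((p z).length), by
        rcases le_or_gt i ((p z).length) with h | h
        · simp [min_eq_left h]
        · rw [min_eq_right h.le, Walk.getVert_length,
            Walk.getVert_of_length_le _ h.le], min_le_right _ _⟩
  have hmaplen : ∀ z, ((p z).map f).length = G.dist s z := by
    intro z; rw [Walk.length_map, hlen]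
  have hkx : k ≤ G.dist s x := le_trans hk₁ (min_le_left _ _)
  have hky : k ≤ G.dist s y := le_trans hk₁ (min_le_right _ _)
  -- triangle facts
  have hxs : G.dist x s = G.dist s x := SimpleGraph.dist_comm
  have hyx : G.dist y x = G.dist x y := SimpleGraph.dist_comm
  have tri1 : G.dist x y ≤ G.dist s x + G.dist s y := by
    have := hG.dist_triangle (u := x) (v := s) (w := y); omega
  have tri2 : G.dist s x ≤ G.dist x y + G.dist s y := by
    have := hG.dist_triangle (u := s) (v := y) (w := x); omega
  have tri3 : G.dist s y ≤ G.dist x y + G.dist s x := by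
    have := hG.dist_triangle (u := s) (v := x) (w := y); omega
  constructor
  · -- upper bound via x_k, y_k
    have t1 : G.dist x y ≤ G.dist x ((p x).getVert k)
        + G.dist ((p x).getVert k) ((p y).getVert k) + G.dist ((p y).getVert k) y := by
      calc G.dist x y ≤ G.dist x ((p x).getVert k) + G.dist ((p x).getVert k) y :=
            hG.dist_triangle
        _ ≤ G.dist x ((p x).getVert k) +
            (G.dist ((p x).getVert k) ((p y).getVert k) + G.dist ((p y).getVert k) y) := by
            exact Nat.add_le_add_left hG.dist_triangle _
        _ = _ := by ring
    have e1 : G.dist x ((p x).getVert k) ≤ G.dist s x - k := by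
      rw [SimpleGraph.dist_comm]; exact hend x k
    have e2 : G.dist ((p y).getVert k) y ≤ G.dist s y - k := hend y k
    have c1 : (G.dist x ((p x).getVert k) : ℝ) ≤ (G.dist s x : ℝ) - k := by
      have : (G.dist x ((p x).getVert k) : ℝ) ≤ ((G.dist s x - k : ℕ) : ℝ) := by
        exact_mod_cast e1
      rwa [Nat.cast_sub hkx] at this
    have c2 : (G.dist ((p y).getVert k) y : ℝ) ≤ (G.dist s y : ℝ) - k := by
      have : (G.dist ((p y).getVert k) y : ℝ) ≤ ((G.dist s y - k : ℕ) : ℝ) := by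
        exact_mod_cast e2
      rwa [Nat.cast_sub hky] at this
    have c0 : (G.dist x y : ℝ) ≤ (G.dist x ((p x).getVert k) : ℝ)
        + (G.dist ((p x).getVert k) ((p y).getVert k) : ℝ)
        + (G.dist ((p y).getVert k) y : ℝ) := by exact_mod_cast t1
    linarith
  · -- lower bound: k is at least ⌊(h x + h y - d)/2⌋
    set j : ℕ := (G.dist s x + G.dist s y - G.dist x y) / 2 with hj
    have hjmin : j ≤ min (G.dist s x) (G.dist s y) := by omega
    have hjg : 2 * j + G.dist x y ≤ G.dist s x + G.dist s y := by omega
    have hj2 : G.dist s x + G.dist s y ≤ 2 * j + G.dist x y + 1 := by omega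
    have hdx : G.dist s ((p x).getVert j) = j := hexact x j (le_trans hjmin (min_le_left _ _))
    have hdy : G.dist s ((p y).getVert j) = j := hexact y j (le_trans hjmin (min_le_right _ _))
    have hthinj : (G.dist ((p x).getVert j) ((p y).getVert j) : ℝ) ≤ δ := by
      refine hthin s x y ((p x).map f) ((p y).map f) (hmaplen x) (hmaplen y)
        _ (hmem x j) _ (hmem y j) (by rw [hdx, hdy]) ?_
      rw [hdx]; exact hjg
    have hjk : j ≤ k := hk₃ j hjmin hthinj
    have : G.dist s x + G.dist s y ≤ 2 * k + G.dist x y + 1 := by omega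
    have hc : (G.dist s x : ℝ) + (G.dist s y : ℝ) ≤ 2 * (k : ℝ) + (G.dist x y : ℝ) + 1 := by
      exact_mod_cast this
    linarith
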